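/- Let C be an [n,k] linear code over a finite field F_q with 1 ≤ k ≤ n-1, with generalized Hamming weights d_1, ..., d_k, and let C^⊥ be its dual code with generalized Hamming weights d_1^⊥, ..., d_{n-k}^⊥. Then {d_i : 1 ≤ i ≤ k} = {1,...,n} \ {n + 1 - d_j^⊥ : 1 ≤ j ≤ n-k}. -/

import Mathlib

open Finset Module

variable {F : Type} [Field F] {n : ℕ}

/-- The subspace of vectors supported inside `A`. -/
def ESub (F : Type) [Field F] {n : ℕ} (A : Finset (Fin n)) : Submodule F (Fin n → F) where
  carrier := {x | ∀ i ∉ A, x i = 0}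
  add_mem' hx hy := by intro i hi; simp only [Pi.add_apply, hx i hi, hy i hi, add_zero]
  zero_mem' := by intro i _; rfl
  smul_mem' c x hx := by intro i hi; simp only [Pi.smul_apply, hx i hi, smul_eq_mul, mul_zero]

lemma mem_ESub {A : Finset (Fin n)} {x : Fin n → F} : x ∈ ESub F A ↔ ∀ i ∉ A, x i = 0 :=
  Iff.rfl

lemma ESub_empty : ESub F (∅ : Finset (Fin n)) = ⊥ := by
  ext x; simp [mem_ESub, Submodule.mem_bot, funext_iff]

lemma ESub_univ : ESub F (Finset.univ : Finset (Fin n)) = ⊤ := by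
  ext x; simp [mem_ESub]

lemma ESub_mono {A B : Finset (Fin n)} (h : A ⊆ B) : ESub F A ≤ ESub F B := by
  intro x hx i hi; exact hx i fun hiA => hi (h hiA)

noncomputable def ESubEquiv (A : Finset (Fin n)) : (ESub F A) ≃ₗ[F] (↥A → F) := by
  refine LinearEquiv.ofBijective
    ({ toFun := fun x i => (x : Fin n → F) i
       map_add' := fun x y => rfl
       map_smul' := fun c x => rfl } : (ESub F A) →ₗ[F] (↥A → F)) ⟨?_, ?_⟩
  · intro x y hxy
    ext i
    by_cases hi : i ∈ A
    · exact congrFun hxy ⟨i, hi⟩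
    · rw [x.2 i hi, y.2 i hi]
  · intro v
    classical
    refine ⟨⟨fun i => if h : i ∈ A then v ⟨i, h⟩ else 0, fun i hi => dif_neg hi⟩, ?_⟩
    ext i
    exact dif_pos i.2

lemma finrank_ESub (A : Finset (Fin n)) : finrank F (ESub F A) = A.card := by
  rw [(ESubEquiv A).finrank_eq, Module.finrank_fintype_fun_eq_card, Fintype.card_coe]
/-- The standard dot-product bilinear form on `Fin n → F`. -/
noncomputable def dotB (F : Type) [Field F] (n : ℕ) : LinearMap.BilinForm F (Fin n → F) :=
  LinearMap.mk₂ F (fun x y => ∑ i, x i * y i)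
    (fun x x' y => by simp [add_mul, Finset.sum_add_distrib])
    (fun c x y => by simp [Finset.mul_sum, mul_assoc])
    (fun x y y' => by simp [mul_add, Finset.sum_add_distrib])
    (fun c x y => by simp only [Pi.smul_apply, smul_eq_mul, Finset.mul_sum]; exact Finset.sum_congr rfl fun i _ => by ring)

@[simp] lemma dotB_apply (x y : Fin n → F) : dotB F n x y = ∑ i, x i * y i := rfl

lemma dotB_symm (x y : Fin n → F) : dotB F n x y = dotB F n y x := by
  simp [mul_comm]

lemma dotB_isRefl : (dotB F n).IsRefl := fun x y h => by rw [dotB_symm] at h; exact h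

lemma dotB_single (i : Fin n) (x : Fin n → F) : dotB F n x (Pi.single i 1) = x i := by
  classical
  simp [Pi.single_apply, mul_ite, Finset.sum_ite_eq']

lemma dotB_nondeg : (dotB F n).Nondegenerate := by
  refine (LinearMap.IsRefl.nondegenerate_iff_separatingLeft (B := dotB F n) (dotB_isRefl (F := F) (n := n))).mpr ?_
  intro x hx
  funext i
  have := hx (Pi.single i 1)
  rwa [dotB_single] at this

/-- orthogonal complement w.r.t. the dot form -/
noncomputable def OC (W : Submodule F (Fin n → F)) : Submodule F (Fin n → F) :=
  (dotB F n).orthogonal W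

lemma mem_OC {W : Submodule F (Fin n → F)} {x : Fin n → F} :
    x ∈ OC W ↔ ∀ c ∈ W, ∑ i, c i * x i = 0 := Iff.rfl

lemma finrank_OC (W : Submodule F (Fin n → F)) :
    finrank F W + finrank F (OC W) = n := by
  have h := LinearMap.BilinForm.finrank_orthogonal (B := dotB F n) dotB_nondeg W
  have h2 : finrank F W ≤ n := by
    simpa [Module.finrank_fintype_fun_eq_card] using
      Submodule.finrank_le W
  rw [OC, h]
  simp [Module.finrank_fintype_fun_eq_card]
  omega

lemma OC_sup (W₁ W₂ : Submodule F (Fin n → F)) : OC (W₁ ⊔ W₂) = OC W₁ ⊓ OC W₂ := by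
  ext x
  simp only [Submodule.mem_inf, mem_OC]
  constructor
  · intro h
    exact ⟨fun c hc => h c (Submodule.mem_sup_left hc),
           fun c hc => h c (Submodule.mem_sup_right hc)⟩
  · rintro ⟨h1, h2⟩ c hc
    rcases Submodule.mem_sup.mp hc with ⟨y, hy, z, hz, rfl⟩
    have : ∑ i, (y + z) i * x i = ∑ i, y i * x i + ∑ i, z i * x i := by
      simp [add_mul, Finset.sum_add_distrib]
    rw [this, h1 y hy, h2 z hz, add_zero]

lemma OC_ESub (A : Finset (Fin n)) : OC (ESub F A) = ESub F Aᶜ := by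
  classical
  ext x
  simp only [mem_OC, mem_ESub, Finset.mem_compl, not_not]
  constructor
  · intro h i hi
    have hs : (Pi.single i 1 : Fin n → F) ∈ ESub F A := by
      intro j hj
      have hne : j ≠ i := by rintro rfl; exact hj hi
      exact Pi.single_eq_of_ne hne 1
    have := h _ hs
    simpa [Pi.single_apply, ite_mul, Finset.sum_ite_eq'] using this
  · intro h c hc
    apply Finset.sum_eq_zero
    intro i _
    by_cases hi : i ∈ A
    · rw [h i hi, mul_zero]
    · rw [hc i hi, zero_mul]
set_option synthInstance.maxHeartbeats 1000000 in
lemma finrank_le_inf_ker_add_one (p : Submodule F (Fin n → F)) (f : (Fin n → F) →ₗ[F] F) :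
    finrank F p ≤ finrank F (p ⊓ LinearMap.ker f : Submodule F (Fin n → F)) + 1 := by
  classical
  have h1 := LinearMap.finrank_range_add_finrank_ker (f.domRestrict p)
  have hker : LinearMap.ker (f.domRestrict p) = (LinearMap.ker f).comap p.subtype := by
    ext x; simp [LinearMap.mem_ker]
  have hcomap : (LinearMap.ker f).comap p.subtype
      = ((p ⊓ LinearMap.ker f : Submodule F (Fin n → F)).comap p.subtype) := by
    ext x; simp [Submodule.mem_comap, x.2]
  have hle : (p ⊓ LinearMap.ker f : Submodule F (Fin n → F)) ≤ p := inf_le_left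
  have heq : finrank F (LinearMap.ker (f.domRestrict p))
      = finrank F (p ⊓ LinearMap.ker f : Submodule F (Fin n → F)) := by
    rw [hker, hcomap]
    exact (Submodule.comapSubtypeEquivOfLe hle).finrank_eq
  have hr : finrank F (LinearMap.range (f.domRestrict p)) ≤ 1 := by
    simpa using Submodule.finrank_le (LinearMap.range (f.domRestrict p))
  omega

/-- existence of a subspace of any dimension `r ≤ finrank W` inside `W` -/
lemma exists_subspace_finrank_eq (W : Submodule F (Fin n → F)) (r : ℕ)
    (hr : r ≤ finrank F W) :
    ∃ D : Submodule F (Fin n → F), D ≤ W ∧ finrank F D = r := by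
  classical
  obtain ⟨D', hD'⟩ : ∃ D' : Submodule F W, finrank F D' = r := by
    let b := finBasis F W
    refine ⟨Submodule.span F (Set.range fun i : Fin r => b (Fin.castLE (by simpa using hr) i)), ?_⟩
    rw [finrank_span_eq_card]
    · simp
    · exact b.linearIndependent.comp _ (Fin.castLE_injective _)
  refine ⟨D'.map W.subtype, ?_, ?_⟩
  · rintro x hx
    rcases Submodule.mem_map.mp hx with ⟨y, _, rfl⟩
    exact y.2
  · rw [Submodule.finrank_map_subtype_eq, hD']

/-- maximal dimension of a subcode of `W` supported on `m` coordinates -/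
noncomputable def gF (W : Submodule F (Fin n → F)) (m : ℕ) : ℕ :=
  ((Finset.univ : Finset (Fin n)).powersetCard m).sup
    fun A => finrank F (W ⊓ ESub F A : Submodule F (Fin n → F))

lemma le_gF (W : Submodule F (Fin n → F)) {A : Finset (Fin n)} {m : ℕ} (hA : A.card = m) :
    finrank F (W ⊓ ESub F A : Submodule F (Fin n → F)) ≤ gF W m := by
  unfold gF
  exact Finset.le_sup (f := fun A => finrank F (W ⊓ ESub F A : Submodule F (Fin n → F)))
    (Finset.mem_powersetCard_univ.mpr hA)

lemma gF_exists (W : Submodule F (Fin n → F)) {m : ℕ} (hm : m ≤ n) :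
    ∃ A : Finset (Fin n), A.card = m ∧
      gF W m = finrank F (W ⊓ ESub F A : Submodule F (Fin n → F)) := by
  have hne : ((Finset.univ : Finset (Fin n)).powersetCard m).Nonempty :=
    Finset.powersetCard_nonempty.mpr (by simpa using hm)
  obtain ⟨A, hA, hA2⟩ := Finset.exists_mem_eq_sup _ hne
    fun A => finrank F (W ⊓ ESub F A : Submodule F (Fin n → F))
  exact ⟨A, Finset.mem_powersetCard_univ.mp hA, hA2⟩

lemma gF_le_finrank (W : Submodule F (Fin n → F)) (m : ℕ) : gF W m ≤ finrank F W := by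
  unfold gF
  apply Finset.sup_le
  intro A _
  exact Submodule.finrank_mono inf_le_left

lemma gF_mono (W : Submodule F (Fin n → F)) {m m' : ℕ} (h : m ≤ m') (h' : m' ≤ n) :
    gF W m ≤ gF W m' := by
  conv_lhs => unfold gF
  apply Finset.sup_le
  intro A hA
  rw [Finset.mem_powersetCard_univ] at hA
  obtain ⟨B, hAB, hB⟩ := Finset.exists_superset_card_eq (hA ▸ h) (by simpa using h')
  exact le_trans (Submodule.finrank_mono (inf_le_inf_left W (ESub_mono hAB))) (le_gF W hB)

lemma gF_step (W : Submodule F (Fin n → F)) {m : ℕ} (hm : m + 1 ≤ n) :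
    gF W (m + 1) ≤ gF W m + 1 := by
  conv_lhs => unfold gF
  apply Finset.sup_le
  intro A hA
  rw [Finset.mem_powersetCard_univ] at hA
  have hAne : A.Nonempty := Finset.card_pos.mp (by omega)
  obtain ⟨j, hj⟩ := hAne
  have key : (W ⊓ ESub F A : Submodule F (Fin n → F)) ⊓
      LinearMap.ker (LinearMap.proj j : (Fin n → F) →ₗ[F] F)
      ≤ W ⊓ ESub F (A.erase j) := by
    rintro x ⟨⟨hxW, hxA⟩, hxj⟩
    refine ⟨hxW, ?_⟩
    intro i hi
    by_cases hij : i = j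
    · subst hij
      simpa using hxj
    · exact hxA i fun hiA => hi (Finset.mem_erase.mpr ⟨hij, hiA⟩)
  have h1 := finrank_le_inf_ker_add_one (W ⊓ ESub F A)
    (LinearMap.proj j : (Fin n → F) →ₗ[F] F)
  have h2 := Submodule.finrank_mono key
  have hcard : (A.erase j).card = m := by rw [Finset.card_erase_of_mem hj]; omega
  have h3 := le_gF W hcard
  omega

lemma gF_zero (W : Submodule F (Fin n → F)) : gF W 0 = 0 := by
  apply Nat.le_antisymm _ (Nat.zero_le _)
  unfold gF
  apply Finset.sup_le
  intro A hA
  rw [Finset.mem_powersetCard_univ, Finset.card_eq_zero] at hA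
  subst hA
  rw [ESub_empty, inf_bot_eq, finrank_bot]

lemma gF_top (W : Submodule F (Fin n → F)) : gF W n = finrank F W := by
  apply Nat.le_antisymm (gF_le_finrank W n)
  have : (Finset.univ : Finset (Fin n)).card = n := by simp
  have h := le_gF W (A := Finset.univ) this
  rwa [ESub_univ, inf_top_eq] at h
lemma key_identity (C Cd : Submodule F (Fin n → F)) (hCd : OC C = Cd) (A : Finset (Fin n)) :
    finrank F (C ⊓ ESub F A : Submodule F (Fin n → F)) + n
      = finrank F C + A.card + finrank F (Cd ⊓ ESub F Aᶜ : Submodule F (Fin n → F)) := by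
  have h1 := Submodule.finrank_sup_add_finrank_inf_eq C (ESub F A)
  have h2 := finrank_OC (C ⊔ ESub F A)
  have h3 : OC (C ⊔ ESub F A) = Cd ⊓ ESub F Aᶜ := by rw [OC_sup, OC_ESub, hCd]
  rw [h3] at h2
  rw [finrank_ESub] at h1
  omega

lemma g_identity (C Cd : Submodule F (Fin n → F)) (hCd : OC C = Cd) {m : ℕ} (hm : m ≤ n) :
    gF C m + n = finrank F C + m + gF Cd (n - m) := by
  classical
  apply Nat.le_antisymm
  · obtain ⟨A, hA, hval⟩ := gF_exists C hm
    have hid := key_identity C Cd hCd A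
    have hAc : Aᶜ.card = n - m := by
      rw [Finset.card_compl, hA]; simp
    have := le_gF Cd hAc
    omega
  · obtain ⟨B, hB, hval⟩ := gF_exists Cd (Nat.sub_le n m)
    have hid := key_identity C Cd hCd Bᶜ
    have hBc : (Bᶜ : Finset (Fin n)).card = m := by
      rw [Finset.card_compl, hB]; simp; omega
    have h1 := le_gF C hBc
    rw [compl_compl] at hid
    omega

lemma d_char (W : Submodule F (Fin n → F)) (r : ℕ) (hr : 1 ≤ r) (dr : ℕ)
    (h : IsLeast {w | ∃ D : Submodule F (Fin n → F), D ≤ W ∧ finrank F D = r ∧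
        Set.ncard {j : Fin n | ∃ c ∈ D, c j ≠ 0} = w} dr) :
    1 ≤ dr ∧ dr ≤ n ∧ ∀ m, m ≤ n → (r ≤ gF W m ↔ dr ≤ m) := by
  classical
  obtain ⟨D, hDW, hDr, hDsupp⟩ := h.1
  set S : Set (Fin n) := {j : Fin n | ∃ c ∈ D, c j ≠ 0} with hS
  have hfin : S.Finite := Set.toFinite S
  set A : Finset (Fin n) := hfin.toFinset with hA
  have hAcard : A.card = dr := by
    rw [← hDsupp, Set.ncard_eq_toFinset_card S hfin]
  have hDA : D ≤ W ⊓ ESub F A := by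
    intro x hx
    refine ⟨hDW hx, ?_⟩
    intro i hi
    rw [hA, Set.Finite.mem_toFinset] at hi
    by_contra hxi
    exact hi ⟨x, hx, hxi⟩
  have hrle : r ≤ gF W dr := by
    calc r = finrank F D := hDr.symm
      _ ≤ finrank F (W ⊓ ESub F A : Submodule F (Fin n → F)) := Submodule.finrank_mono hDA
      _ ≤ gF W dr := le_gF W hAcard
  have hdrn : dr ≤ n := by
    rw [← hAcard]
    simpa using Finset.card_le_univ A
  have hdr1 : 1 ≤ dr := by
    by_contra hdr
    have : dr = 0 := by omega
    subst this
    rw [Finset.card_eq_zero] at hAcard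
    rw [hAcard, ESub_empty, inf_bot_eq] at hDA
    have : finrank F D = 0 := by
      have := Submodule.finrank_mono hDA
      simpa [finrank_bot] using this
    omega
  refine ⟨hdr1, hdrn, fun m hm => ⟨?_, fun hdm => le_trans hrle (gF_mono W hdm hm)⟩⟩
  intro hgm
  obtain ⟨B, hB, hval⟩ := gF_exists W hm
  obtain ⟨D', hD'le, hD'r⟩ := exists_subspace_finrank_eq (W ⊓ ESub F B) r (by omega)
  have hsub : {j : Fin n | ∃ c ∈ D', c j ≠ 0} ⊆ (B : Set (Fin n)) := by
    intro j hj
    obtain ⟨c, hc, hcj⟩ := hj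
    by_contra hjB
    exact hcj ((hD'le hc).2 j (by simpa using hjB))
  have hle : Set.ncard {j : Fin n | ∃ c ∈ D', c j ≠ 0} ≤ m := by
    calc Set.ncard {j : Fin n | ∃ c ∈ D', c j ≠ 0}
        ≤ Set.ncard (B : Set (Fin n)) := Set.ncard_le_ncard hsub (Set.toFinite _)
      _ = B.card := Set.ncard_coe_finset B
      _ = m := hB
  exact le_trans (h.2 ⟨D', le_trans hD'le inf_le_left, hD'r, rfl⟩) hle
lemma jump_iff (W : Submodule F (Fin n → F)) (kW : ℕ) (hWk : finrank F W = kW)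
    (dW : ℕ → ℕ)
    (hW : ∀ r, 1 ≤ r → r ≤ kW → IsLeast {w | ∃ D : Submodule F (Fin n → F), D ≤ W ∧
      finrank F D = r ∧ Set.ncard {j : Fin n | ∃ c ∈ D, c j ≠ 0} = w} (dW r))
    {m : ℕ} (hm1 : 1 ≤ m) (hmn : m ≤ n) :
    (∃ r, (1 ≤ r ∧ r ≤ kW) ∧ dW r = m) ↔ gF W (m - 1) < gF W m := by
  constructor
  · rintro ⟨r, ⟨hr1, hrk⟩, hrm⟩
    obtain ⟨hb1, hbn, hchar⟩ := d_char W r hr1 (dW r) (hW r hr1 hrk)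
    have h1 : r ≤ gF W m := (hchar m hmn).mpr (by omega)
    have h2 : ¬ r ≤ gF W (m - 1) := by
      intro hcon
      have := (hchar (m - 1) (by omega)).mp hcon
      omega
    omega
  · intro hjump
    set r := gF W m with hrdef
    have hr1 : 1 ≤ r := by omega
    have hrk : r ≤ kW := hWk ▸ gF_le_finrank W m
    obtain ⟨hb1, hbn, hchar⟩ := d_char W r hr1 (dW r) (hW r hr1 hrk)
    have h1 : dW r ≤ m := (hchar m hmn).mp le_rfl
    have h2 : ¬ dW r ≤ m - 1 := by
      intro hcon
      have := (hchar (m - 1) (by omega)).mpr hcon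
      omega
    exact ⟨r, ⟨hr1, hrk⟩, by omega⟩

theorem stmt_11 (n k : ℕ) (hk : 1 ≤ k) (hkn : k ≤ n - 1)
    (F : Type) [Field F] [Fintype F] [DecidableEq F]
    (C : Submodule F (Fin n → F)) (hdim : Module.finrank F C = k)
    (Cd : Submodule F (Fin n → F))
    (hCd : ∀ x, x ∈ Cd ↔ ∀ c ∈ C, ∑ i, x i * c i = 0)
    (d dperp : ℕ → ℕ)
    (hd : ∀ i, 1 ≤ i → i ≤ k →
      IsLeast {w | ∃ D : Submodule F (Fin n → F), D ≤ C ∧ Module.finrank F D = i ∧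
        Set.ncard {j : Fin n | ∃ c ∈ D, c j ≠ 0} = w} (d i))
    (hdperp : ∀ j, 1 ≤ j → j ≤ n - k →
      IsLeast {w | ∃ D : Submodule F (Fin n → F), D ≤ Cd ∧ Module.finrank F D = j ∧
        Set.ncard {i : Fin n | ∃ c ∈ D, c i ≠ 0} = w} (dperp j)) :
    (Finset.Icc 1 k).image d =
      Finset.Icc 1 n \ (Finset.Icc 1 (n - k)).image (fun j => n + 1 - dperp j) := by
  have hn1 : 1 ≤ n := by omega
  have hkn' : k + 1 ≤ n := by omega
  have hCdOC : OC C = Cd := by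
    ext x
    rw [mem_OC, hCd]
    constructor
    · intro h c hc
      rw [← h c hc]
      exact Finset.sum_congr rfl fun i _ => mul_comm _ _
    · intro h c hc
      rw [← h c hc]
      exact Finset.sum_congr rfl fun i _ => mul_comm _ _
  have hfCd : finrank F Cd = n - k := by
    have hid := g_identity C Cd hCdOC (Nat.zero_le n)
    rw [gF_zero, Nat.sub_zero, gF_top, hdim] at hid
    omega
  ext m
  simp only [Finset.mem_image, Finset.mem_sdiff, Finset.mem_Icc]
  by_cases hmI : 1 ≤ m ∧ m ≤ n
  · obtain ⟨hm1, hmn⟩ := hmI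
    have hm'1 : 1 ≤ n + 1 - m := by omega
    have hm'n : n + 1 - m ≤ n := by omega
    have id1 := g_identity C Cd hCdOC hmn
    have id2 := g_identity C Cd hCdOC (show m - 1 ≤ n by omega)
    have e1 : n - m = n + 1 - m - 1 := by omega
    have e2 : n - (m - 1) = n + 1 - m := by omega
    rw [e1] at id1
    rw [e2, hdim] at id2
    rw [hdim] at id1
    have s1 : gF C (m - 1 + 1) ≤ gF C (m - 1) + 1 := gF_step C (by omega)
    rw [show m - 1 + 1 = m by omega] at s1
    have mono1 : gF C (m - 1) ≤ gF C m := gF_mono C (by omega) hmn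
    have s2 : gF Cd (n + 1 - m - 1 + 1) ≤ gF Cd (n + 1 - m - 1) + 1 := gF_step Cd (by omega)
    rw [show n + 1 - m - 1 + 1 = n + 1 - m by omega] at s2
    have mono2 : gF Cd (n + 1 - m - 1) ≤ gF Cd (n + 1 - m) := gF_mono Cd (by omega) hm'n
    have hequiv : (∃ s, (1 ≤ s ∧ s ≤ n - k) ∧ n + 1 - dperp s = m)
        ↔ (∃ s, (1 ≤ s ∧ s ≤ n - k) ∧ dperp s = n + 1 - m) := by
      apply exists_congr
      intro s
      constructor
      · rintro ⟨⟨hs1, hs2⟩, hsm⟩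
        obtain ⟨hb1, hbn, -⟩ := d_char Cd s hs1 (dperp s) (hdperp s hs1 hs2)
        exact ⟨⟨hs1, hs2⟩, by omega⟩
      · rintro ⟨⟨hs1, hs2⟩, hsm⟩
        obtain ⟨hb1, hbn, -⟩ := d_char Cd s hs1 (dperp s) (hdperp s hs1 hs2)
        exact ⟨⟨hs1, hs2⟩, by omega⟩
    have jumpL := jump_iff C k hdim d hd hm1 hmn
    have jumpR := jump_iff Cd (n - k) hfCd dperp hdperp hm'1 hm'n
    rw [jumpL, hequiv, jumpR]
    clear jumpL jumpR hequiv hd hdperp hCd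
    omega
  · constructor
    · rintro ⟨r, ⟨hr1, hrk⟩, hrm⟩
      obtain ⟨hb1, hbn, -⟩ := d_char C r hr1 (d r) (hd r hr1 hrk)
      omega
    · rintro ⟨h1, -⟩
      omega
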